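/- The quadratic 1 − x + t₂x² = 0 has a unique solution in ℚ[[t₂]] (formal power series), and that solution is the Catalan generating series. -/

import Mathlib

lemma sol_eq_catalan (S : PowerSeries ℚ)
    (h : 1 - S + PowerSeries.X * S ^ 2 = 0) :
    S = PowerSeries.mk fun n => (catalan n : ℚ) := by
  have hS : S = 1 + PowerSeries.X * S ^ 2 := by linear_combination -h
  ext n
  induction n using Nat.strong_induction_on with
  | _ n ih =>
    cases n with
    | zero =>
      rw [hS]
      simp
    | succ n =>
      rw [hS, map_add, PowerSeries.coeff_succ_X_mul, sq, PowerSeries.coeff_mul]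
      simp only [PowerSeries.coeff_one, Nat.succ_ne_zero, if_false, zero_add,
        PowerSeries.coeff_mk, catalan_succ', Nat.cast_sum, Nat.cast_mul]
      refine Finset.sum_congr rfl fun ij hij => ?_
      rw [Finset.HasAntidiagonal.mem_antidiagonal] at hij
      rw [ih ij.1 (by omega), ih ij.2 (by omega), PowerSeries.coeff_mk,
        PowerSeries.coeff_mk]

theorem stmt_6 :
    (∀ S₁ S₂ : PowerSeries ℚ,
        1 - S₁ + PowerSeries.X * S₁ ^ 2 = 0 →
        1 - S₂ + PowerSeries.X * S₂ ^ 2 = 0 → S₁ = S₂) ∧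
    (∀ S : PowerSeries ℚ, 1 - S + PowerSeries.X * S ^ 2 = 0 →
        S = PowerSeries.mk fun n => (catalan n : ℚ)) := by
  refine ⟨fun S₁ S₂ h₁ h₂ => ?_, sol_eq_catalan⟩
  rw [sol_eq_catalan S₁ h₁, sol_eq_catalan S₂ h₂]
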